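/- Let σ ↦ (R(σ), z(σ)) be defined by R = √10 (σ+1)/(6√(9σ²−10σ+5)) and z = −√10 (σ−1)(σ²−10σ+5)/(9σ²−10σ+5)^{3/2}. Then for all σ with 9σ²−10σ+5 > 0, the pair (R, z) satisfies the algebraic relation 20(1−3R²)³ − 27(z + 14R³ − 4R)² = 0. -/

import Mathlib

/-- the parametric curve
`R = √10(σ+1)/(6√(9σ²−10σ+5))`,
`z = −√10(σ−1)(σ²−10σ+5)/(9σ²−10σ+5)^{3/2}`
lies on the algebraic curve `20(1−3R²)³ − 27(z + 14R³ − 4R)² = 0`. -/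
theorem parametric_algebraic_solution (σ : ℝ)
    (hpos : 9 * σ ^ 2 - 10 * σ + 5 > 0) :
    let R : ℝ := Real.sqrt 10 * (σ + 1) / (6 * Real.sqrt (9 * σ ^ 2 - 10 * σ + 5))
    let z : ℝ := -(Real.sqrt 10 * (σ - 1) * (σ ^ 2 - 10 * σ + 5))
      / (9 * σ ^ 2 - 10 * σ + 5) ^ ((3 : ℝ) / 2)
    20 * (1 - 3 * R ^ 2) ^ 3 - 27 * (z + 14 * R ^ 3 - 4 * R) ^ 2 = 0 := by
  intro R z
  set s : ℝ := Real.sqrt (9 * σ ^ 2 - 10 * σ + 5) with hs_def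
  set q : ℝ := Real.sqrt 10 with hq_def
  have hs2 : s ^ 2 = 9 * σ ^ 2 - 10 * σ + 5 := Real.sq_sqrt hpos.le
  have hq2 : q ^ 2 = 10 := Real.sq_sqrt (by norm_num)
  have hs0 : s ≠ 0 := by positivity
  have hq0 : q ≠ 0 := by positivity
  have h32 : (9 * σ ^ 2 - 10 * σ + 5 : ℝ) ^ ((3 : ℝ) / 2) = s ^ 3 := by
    rw [show ((3 : ℝ)/2) = (1/2) * 3 by norm_num, Real.rpow_mul hpos.le,
      ← Real.sqrt_eq_rpow, ← hs_def,
      show ((3 : ℝ)) = ((3 : ℕ) : ℝ) by norm_num, Real.rpow_natCast]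
  show 20 * (1 - 3 * (q * (σ + 1) / (6 * s)) ^ 2) ^ 3 -
      27 * (-(q * (σ - 1) * (σ ^ 2 - 10 * σ + 5)) / (9 * σ ^ 2 - 10 * σ + 5) ^ ((3:ℝ)/2)
        + 14 * (q * (σ + 1) / (6 * s)) ^ 3 - 4 * (q * (σ + 1) / (6 * s))) ^ 2 = 0
  rw [h32]
  field_simp
  rw [hs2, hq2]
  ring
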